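/- Let (G,m,w,B) be a connected weighted finite graph with boundary. Then for every i = 1, 2, …, |Ω|: μ_i(Ω) + min_{x∈Ω} Deg_b(x) ≤ λ_i ≤ μ_i(Ω) + max_{x∈Ω} Deg_b(x). -/
import Mathlib


open Finset

noncomputable section

/-- The weighted graph Laplacian `Δ`. -/
def glap {V : Type*} [Fintype V] (m : V → ℝ) (w : V → V → ℝ) (u : V → ℝ) (x : V) : ℝ :=
  (1 / m x) * ∑ y, (u y - u x) * w x y

/-- Extension by zero to the boundary. -/
def E0 {V : Type*} [DecidableEq V] (B : Finset V) (u : {x : V // x ∉ B} → ℝ) (x : V) : ℝ :=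
  if h : x ∈ B then 0 else u ⟨x, h⟩

/-- The normal extension. -/
def N0 {V : Type*} [Fintype V] [DecidableEq V] (w : V → V → ℝ) (B : Finset V)
    (u : {x : V // x ∉ B} → ℝ) (x : V) : ℝ :=
  if h : x ∈ B then
    (∑ y : {x : V // x ∉ B}, u y * w x y.1) / (∑ y : {x : V // x ∉ B}, w x y.1)
  else u ⟨x, h⟩

/-- The Dirichlet Laplacian `Δ^D`. -/
def dlap {V : Type*} [Fintype V] [DecidableEq V] (m : V → ℝ) (w : V → V → ℝ) (B : Finset V)
    (u : {x : V // x ∉ B} → ℝ) (x : {x : V // x ∉ B}) : ℝ :=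
  glap m w (E0 B u) x.1

/-- The Neumann Laplacian `Δ^N`. -/
def nlap {V : Type*} [Fintype V] [DecidableEq V] (m : V → ℝ) (w : V → V → ℝ) (B : Finset V)
    (u : {x : V // x ∉ B} → ℝ) (x : {x : V // x ∉ B}) : ℝ :=
  glap m w (N0 w B u) x.1

/-- The Laplacian `Δ_Ω` of the induced interior subgraph. -/
def olap {V : Type*} [Fintype V] [DecidableEq V] (m : V → ℝ) (w : V → V → ℝ) (B : Finset V)
    (u : {x : V // x ∉ B} → ℝ) (x : {x : V // x ∉ B}) : ℝ :=
  (1 / m x.1) * ∑ y : {x : V // x ∉ B}, (u y - u x) * w x.1 y.1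

/-- The weighted boundary vertex degree `Deg_b`. -/
def degb {V : Type*} [DecidableEq V] (m : V → ℝ) (w : V → V → ℝ) (B : Finset V) (x : V) : ℝ :=
  (1 / m x) * ∑ y ∈ B, w x y

/-- The operator `T = A_B ∘ Deg⁻¹ ∘ A_Ω`. -/
def bop {V : Type*} [Fintype V] [DecidableEq V] (m : V → ℝ) (w : V → V → ℝ) (B : Finset V)
    (u : {x : V // x ∉ B} → ℝ) (z : {x : V // x ∉ B}) : ℝ :=
  (1 / m z.1) * ∑ x ∈ B, w x z.1 *
    ((∑ y : {x : V // x ∉ B}, u y * w x y.1) / (∑ y : {x : V // x ∉ B}, w x y.1))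

/-- The Bakry–Émery `Γ` operator of a Laplacian-type operator `L`. -/
def gam {W : Type*} (L : (W → ℝ) → (W → ℝ)) (f g : W → ℝ) (x : W) : ℝ :=
  (L (fun y => f y * g y) x - f x * L g x - g x * L f x) / 2

/-- The Bakry–Émery `Γ₂` operator of a Laplacian-type operator `L`. -/
def gam2 {W : Type*} (L : (W → ℝ) → (W → ℝ)) (f : W → ℝ) (x : W) : ℝ :=
  L (gam L f f) x / 2 - gam L f (L f) x

/-- `e` is a complete list of the eigenvalues of `L` : there is a corresponding eigenbasis
which is orthonormal with respect to the inner product weighted by `m`. -/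
def IsEigenBasis {n : ℕ} {W : Type*} [Fintype W] (m : W → ℝ)
    (L : (W → ℝ) → (W → ℝ)) (e : Fin n → ℝ) : Prop :=
  ∃ φ : Fin n → W → ℝ,
    (∀ i j, (∑ x, φ i x * φ j x * m x) = if i = j then 1 else 0) ∧
    ∀ i, L (φ i) = fun x => e i * φ i x


lemma ip_left {W ι : Type*} [Fintype W] [Fintype ι] (m g : W → ℝ) (cv : ι → ℝ)
    (f : ι → W → ℝ) :
    (∑ x, (∑ l, cv l * f l x) * g x * m x) = ∑ l, cv l * (∑ x, f l x * g x * m x) := by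
  simp_rw [Finset.sum_mul, Finset.mul_sum]
  rw [Finset.sum_comm]
  exact sum_congr rfl fun l _ => sum_congr rfl fun x _ => by ring

lemma complete_rel {W : Type*} [Fintype W] [DecidableEq W] (m : W → ℝ)
    (ψ : Fin (Fintype.card W) → W → ℝ)
    (h : ∀ i j, (∑ x, ψ i x * ψ j x * m x) = if i = j then 1 else 0) :
    ∀ x y, (∑ j, ψ j x * ψ j y * m x) = if x = y then 1 else 0 := by
  let e : Fin (Fintype.card W) ≃ W := (Fintype.equivFin W).symm
  let A : Matrix (Fin (Fintype.card W)) (Fin (Fintype.card W)) ℝ := Matrix.of fun i j => ψ i (e j)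
  let Bm : Matrix (Fin (Fintype.card W)) (Fin (Fintype.card W)) ℝ :=
    Matrix.of fun j i => ψ i (e j) * m (e j)
  have hAB : A * Bm = 1 := by
    ext i k
    have := h i k
    rw [← Equiv.sum_comp e (fun x => ψ i x * ψ k x * m x)] at this
    simp only [Matrix.mul_apply, A, Bm, Matrix.of_apply, Matrix.one_apply]
    rw [← this]
    exact Finset.sum_congr rfl fun j _ => by ring
  have hBA : Bm * A = 1 := mul_eq_one_comm.mp hAB
  intro x y
  have := congrFun (congrFun hBA (e.symm x)) (e.symm y)
  simp only [Matrix.mul_apply, A, Bm, Matrix.of_apply, Matrix.one_apply,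
    Equiv.apply_symm_apply, EmbeddingLike.apply_eq_iff_eq] at this
  rw [← this]
  exact Finset.sum_congr rfl fun j _ => by ring

lemma expansion {W : Type*} [Fintype W] [DecidableEq W] (m : W → ℝ)
    (ψ : Fin (Fintype.card W) → W → ℝ)
    (h : ∀ i j, (∑ x, ψ i x * ψ j x * m x) = if i = j then 1 else 0) (u : W → ℝ) :
    ∀ x, u x = ∑ j, (∑ y, u y * ψ j y * m y) * ψ j x := by
  intro x
  have key := complete_rel m ψ h
  calc u x = ∑ y, u y * (∑ j, ψ j y * ψ j x * m y) := by
        rw [Finset.sum_eq_single x]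
        · rw [key x x]; simp
        · intro y _ hy; rw [key y x, if_neg hy, mul_zero]
        · intro hx; exact absurd (Finset.mem_univ x) hx
    _ = ∑ j, (∑ y, u y * ψ j y * m y) * ψ j x := by
        simp_rw [Finset.mul_sum, Finset.sum_mul]
        rw [Finset.sum_comm]
        exact Finset.sum_congr rfl fun j _ => Finset.sum_congr rfl fun y _ => by ring

lemma weyl_key {W : Type*} [Fintype W] [DecidableEq W] (m : W → ℝ) (_hm : ∀ x, 0 < m x)
    (L1 L2 : (W → ℝ) → (W → ℝ))
    (hL1 : ∀ (r : ℕ) (c : Fin r → ℝ) (f : Fin r → W → ℝ),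
      L1 (fun x => ∑ j, c j * f j x) = fun x => ∑ j, c j * L1 (f j) x)
    (hL2 : ∀ (r : ℕ) (c : Fin r → ℝ) (f : Fin r → W → ℝ),
      L2 (fun x => ∑ j, c j * f j x) = fun x => ∑ j, c j * L2 (f j) x)
    (a b : Fin (Fintype.card W) → ℝ) (ha : Monotone a) (hb : Monotone b)
    (hA : IsEigenBasis m L1 (fun i => -(a i))) (hB : IsEigenBasis m L2 (fun i => -(b i)))
    (c : ℝ)
    (hq : ∀ u : W → ℝ, (∑ x, (-(L1 u x)) * u x * m x) ≤
      (∑ x, (-(L2 u x)) * u x * m x) + c * ∑ x, u x * u x * m x) :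
    ∀ i, a i ≤ b i + c := by
  intro i
  obtain ⟨ψ, hψon, hψeig⟩ := hA
  obtain ⟨φ, hφon, hφeig⟩ := hB
  have hk1 : (i : ℕ) + 1 ≤ Fintype.card W := i.isLt
  have hk : (i : ℕ) ≤ Fintype.card W := le_of_lt i.isLt
  -- Gram matrix and nontrivial kernel
  set M : Matrix (Fin (i : ℕ)) (Fin ((i : ℕ) + 1)) ℝ := Matrix.of fun j l =>
    ∑ x, φ (Fin.castLE hk1 l) x * ψ (Fin.castLE hk j) x * m x with hM
  have hni : ¬ Function.Injective M.mulVecLin := by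
    intro hinj
    have := LinearMap.finrank_le_finrank_of_injective hinj
    simp [Module.finrank_fin_fun] at this
  have hker : LinearMap.ker M.mulVecLin ≠ ⊥ := by
    rwa [Ne, LinearMap.ker_eq_bot]
  obtain ⟨cv, hcvker, hcvne⟩ := Submodule.exists_mem_ne_zero_of_ne_bot hker
  have hcvker' : M.mulVec cv = 0 := LinearMap.mem_ker.mp hcvker
  set u : W → ℝ := fun x => ∑ l, cv l * φ (Fin.castLE hk1 l) x with hu
  -- u is orthogonal to the first i eigenvectors ψ
  have orth : ∀ jn : Fin (Fintype.card W), (jn : ℕ) < (i : ℕ) →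
      (∑ x, u x * ψ jn x * m x) = 0 := by
    intro jn hjn
    have h1 := congrFun hcvker' ⟨(jn : ℕ), hjn⟩
    have h2 : Fin.castLE hk ⟨(jn : ℕ), hjn⟩ = jn := by
      apply Fin.ext; simp
    simp only [Matrix.mulVec, dotProduct, hM, Matrix.of_apply, Pi.zero_apply, h2] at h1
    rw [hu]
    simp only []
    rw [ip_left]
    rw [← h1]
    exact sum_congr rfl fun l _ => by ring
  -- inner products with the φ's
  have hip_phi : ∀ l0 : Fin ((i : ℕ) + 1),
      (∑ x, φ (Fin.castLE hk1 l0) x * u x * m x) = cv l0 := by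
    intro l0
    have : (∑ x, u x * φ (Fin.castLE hk1 l0) x * m x) = cv l0 := by
      rw [hu]; simp only []
      rw [ip_left]
      have : ∀ l, (∑ x, φ (Fin.castLE hk1 l) x * φ (Fin.castLE hk1 l0) x * m x)
          = if l = l0 then 1 else 0 := by
        intro l
        rw [hφon]
        congr 1
        simp [Fin.castLE_inj]
      simp_rw [this]
      simp
    rw [← this]
    exact sum_congr rfl fun x _ => by ring
  have hipuu : (∑ x, u x * u x * m x) = ∑ l, cv l * cv l := by
    conv_lhs => rw [hu]
    simp only []
    rw [ip_left]
    exact sum_congr rfl fun l _ => by rw [hip_phi l]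
  have hpos : 0 < ∑ l, cv l * cv l := by
    obtain ⟨l0, hl0⟩ := Function.ne_iff.mp hcvne
    apply Finset.sum_pos' (fun l _ => mul_self_nonneg _)
    exact ⟨l0, Finset.mem_univ _, mul_self_pos.mpr hl0⟩
  -- Q2
  have hQ2 : (∑ x, (-(L2 u x)) * u x * m x) ≤ b i * ∑ l, cv l * cv l := by
    have hL2u : ∀ x, -(L2 u x) = ∑ l, (b (Fin.castLE hk1 l) * cv l) * φ (Fin.castLE hk1 l) x := by
      intro x
      rw [hu]
      rw [hL2]
      simp only [hφeig]
      rw [← Finset.sum_neg_distrib]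
      exact sum_congr rfl fun l _ => by ring
    calc (∑ x, (-(L2 u x)) * u x * m x)
        = ∑ x, (∑ l, (b (Fin.castLE hk1 l) * cv l) * φ (Fin.castLE hk1 l) x) * u x * m x := by
          exact sum_congr rfl fun x _ => by rw [hL2u]
      _ = ∑ l, (b (Fin.castLE hk1 l) * cv l) * (∑ x, φ (Fin.castLE hk1 l) x * u x * m x) :=
          ip_left m u _ _
      _ = ∑ l, b (Fin.castLE hk1 l) * (cv l * cv l) := by
          exact sum_congr rfl fun l _ => by rw [hip_phi l]; ring
      _ ≤ ∑ l, b i * (cv l * cv l) := by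
          apply Finset.sum_le_sum
          intro l _
          apply mul_le_mul_of_nonneg_right _ (mul_self_nonneg _)
          apply hb
          rw [Fin.le_def]
          simp [Fin.is_le]
      _ = b i * ∑ l, cv l * cv l := by rw [Finset.mul_sum]
  -- Q1
  set d : Fin (Fintype.card W) → ℝ := fun jn => ∑ y, u y * ψ jn y * m y with hd
  have hux : u = fun x => ∑ jn, d jn * ψ jn x := funext (expansion m ψ hψon u)
  have hipd : ∀ jn, (∑ x, ψ jn x * u x * m x) = d jn := by
    intro jn
    rw [hd]
    exact sum_congr rfl fun x _ => by ring
  have hipuud : (∑ x, u x * u x * m x) = ∑ jn, d jn * d jn := by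
    calc (∑ x, u x * u x * m x)
        = ∑ x, (∑ jn, d jn * ψ jn x) * u x * m x := by
          refine sum_congr rfl fun x _ => ?_
          rw [show (∑ jn, d jn * ψ jn x) = u x from (congrFun hux x).symm]
      _ = ∑ jn, d jn * (∑ x, ψ jn x * u x * m x) := ip_left m u d ψ
      _ = ∑ jn, d jn * d jn := sum_congr rfl fun jn _ => by rw [hipd jn]
  have hQ1 : a i * (∑ x, u x * u x * m x) ≤ ∑ x, (-(L1 u x)) * u x * m x := by
    have hL1u : ∀ x, -(L1 u x) = ∑ jn, (a jn * d jn) * ψ jn x := by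
      intro x
      conv_lhs => rw [hux]
      rw [hL1]
      simp only [hψeig]
      rw [← Finset.sum_neg_distrib]
      exact sum_congr rfl fun jn _ => by ring
    have hQ1v : (∑ x, (-(L1 u x)) * u x * m x) = ∑ jn, a jn * (d jn * d jn) := by
      calc (∑ x, (-(L1 u x)) * u x * m x)
          = ∑ x, (∑ jn, (a jn * d jn) * ψ jn x) * u x * m x :=
            sum_congr rfl fun x _ => by rw [hL1u]
        _ = ∑ jn, (a jn * d jn) * (∑ x, ψ jn x * u x * m x) := ip_left m u _ _
        _ = ∑ jn, a jn * (d jn * d jn) := sum_congr rfl fun jn _ => by rw [hipd jn]; ring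
    rw [hQ1v, hipuud, Finset.mul_sum]
    apply Finset.sum_le_sum
    intro jn _
    rcases lt_or_ge ((jn : ℕ)) ((i : ℕ)) with hlt | hle
    · have : d jn = 0 := orth jn hlt
      simp [this]
    · apply mul_le_mul_of_nonneg_right _ (mul_self_nonneg _)
      apply ha
      rwa [Fin.le_def]
  -- conclude
  have hfin : a i * (∑ l, cv l * cv l) ≤ (b i + c) * (∑ l, cv l * cv l) := by
    calc a i * (∑ l, cv l * cv l)
        ≤ ∑ x, (-(L1 u x)) * u x * m x := by rw [← hipuu]; exact hQ1
      _ ≤ (∑ x, (-(L2 u x)) * u x * m x) + c * ∑ x, u x * u x * m x := hq u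
      _ ≤ b i * (∑ l, cv l * cv l) + c * (∑ l, cv l * cv l) := by
          rw [hipuu]; exact add_le_add hQ2 le_rfl
      _ = (b i + c) * (∑ l, cv l * cv l) := by ring
  exact le_of_mul_le_mul_right (by linarith [hfin]) hpos

lemma olap_lin {V : Type*} [Fintype V] [DecidableEq V] (m : V → ℝ) (w : V → V → ℝ)
    (B : Finset V) (r : ℕ) (c : Fin r → ℝ) (f : Fin r → {x : V // x ∉ B} → ℝ) :
    olap m w B (fun x => ∑ j, c j * f j x) = fun x => ∑ j, c j * olap m w B (f j) x := by
  funext z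
  simp only [olap]
  simp only [← Finset.sum_sub_distrib, Finset.sum_mul, Finset.mul_sum]
  rw [Finset.sum_comm]
  exact sum_congr rfl fun y _ => sum_congr rfl fun j _ => by ring

lemma E0_lin {V : Type*} [Fintype V] [DecidableEq V] (B : Finset V) (r : ℕ) (c : Fin r → ℝ)
    (f : Fin r → {x : V // x ∉ B} → ℝ) :
    E0 B (fun x => ∑ j, c j * f j x) = fun y => ∑ j, c j * E0 B (f j) y := by
  funext y
  by_cases h : y ∈ B
  · simp [E0, h]
  · simp [E0, h]

lemma dlap_lin {V : Type*} [Fintype V] [DecidableEq V] (m : V → ℝ) (w : V → V → ℝ)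
    (B : Finset V) (r : ℕ) (c : Fin r → ℝ) (f : Fin r → {x : V // x ∉ B} → ℝ) :
    dlap m w B (fun x => ∑ j, c j * f j x) = fun x => ∑ j, c j * dlap m w B (f j) x := by
  funext z
  simp only [dlap, glap, E0_lin]
  simp only [← Finset.sum_sub_distrib, Finset.sum_mul, Finset.mul_sum]
  rw [Finset.sum_comm]
  exact sum_congr rfl fun y _ => sum_congr rfl fun j _ => by ring

lemma dlap_eq {V : Type*} [Fintype V] [DecidableEq V] (m : V → ℝ) (w : V → V → ℝ)
    (B : Finset V) (u : {x : V // x ∉ B} → ℝ) (x : {x : V // x ∉ B}) :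
    dlap m w B u x = olap m w B u x - degb m w B x.1 * u x := by
  have hEx : E0 B u x.1 = u x := by simp [E0, x.2]
  simp only [dlap, glap, hEx]
  rw [← Finset.sum_add_sum_compl B]
  have h1 : (∑ y ∈ B, (E0 B u y - u x) * w x.1 y) = -(u x) * ∑ y ∈ B, w x.1 y := by
    rw [Finset.mul_sum]
    exact sum_congr rfl fun y hy => by simp [E0, hy]
  have h2 : (∑ y ∈ Bᶜ, (E0 B u y - u x) * w x.1 y)
      = ∑ y : {x : V // x ∉ B}, (u y - u x) * w x.1 y.1 := by
    rw [Finset.sum_subtype Bᶜ (fun y => Finset.mem_compl)]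
    exact sum_congr rfl fun y _ => by simp [E0, y.2]
  rw [h1, h2]
  simp only [olap, degb]
  ring


theorem stmt_5 {V : Type*} [Fintype V] [DecidableEq V]
    (G : SimpleGraph V) (hconn : G.Connected)
    (m : V → ℝ) (hm : ∀ x, 0 < m x)
    (w : V → V → ℝ) (hwsymm : ∀ x y, w x y = w y x)
    (hwpos : ∀ x y, G.Adj x y → 0 < w x y)
    (hw0 : ∀ x y, ¬ G.Adj x y → w x y = 0)
    (B : Finset V) (hB : B.Nonempty)
    (hBB : ∀ x ∈ B, ∀ y ∈ B, ¬ G.Adj x y)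
    (hBint : ∀ x ∈ B, ∃ y, y ∉ B ∧ G.Adj x y)
    (lam : Fin (Fintype.card {x : V // x ∉ B}) → ℝ) (hlammono : Monotone lam)
    (hlam : IsEigenBasis (fun x : {x : V // x ∉ B} => m x.1) (dlap m w B) (fun i => -(lam i)))
    (μΩ : Fin (Fintype.card {x : V // x ∉ B}) → ℝ) (hμΩmono : Monotone μΩ)
    (hμΩ : IsEigenBasis (fun x : {x : V // x ∉ B} => m x.1) (olap m w B) (fun i => -(μΩ i)))
    :
    ∀ i : Fin (Fintype.card {x : V // x ∉ B}),
      μΩ i + (⨅ x : {x : V // x ∉ B}, degb m w B x.1) ≤ lam i ∧ lam i ≤ μΩ i + (⨆ x : {x : V // x ∉ B}, degb m w B x.1) := by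
  intro i
  have hqs : ∀ u : {x : V // x ∉ B} → ℝ,
      (∑ x, (-(dlap m w B u x)) * u x * m x.1) ≤
      (∑ x, (-(olap m w B u x)) * u x * m x.1) +
        (⨆ x : {x : V // x ∉ B}, degb m w B x.1) * ∑ x, u x * u x * m x.1 := by
    intro u
    calc (∑ x, (-(dlap m w B u x)) * u x * m x.1)
        = (∑ x, (-(olap m w B u x)) * u x * m x.1)
            + ∑ x, degb m w B x.1 * (u x * u x * m x.1) := by
          rw [← Finset.sum_add_distrib]
          exact Finset.sum_congr rfl fun x _ => by rw [dlap_eq]; ring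
      _ ≤ _ := by
          apply add_le_add le_rfl
          rw [Finset.mul_sum]
          apply Finset.sum_le_sum
          intro x _
          exact mul_le_mul_of_nonneg_right
            (le_ciSup (f := fun x : {x : V // x ∉ B} => degb m w B x.1) (Set.Finite.bddAbove (Set.finite_range _)) x)
            (mul_nonneg (mul_self_nonneg _) (le_of_lt (hm x.1)))
  have hub := weyl_key (fun x : {x : V // x ∉ B} => m x.1) (fun x => hm x.1)
    (dlap m w B) (olap m w B) (dlap_lin m w B) (olap_lin m w B)
    lam μΩ hlammono hμΩmono hlam hμΩ
    (⨆ x : {x : V // x ∉ B}, degb m w B x.1) hqs i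
  have hqi : ∀ u : {x : V // x ∉ B} → ℝ,
      (∑ x, (-(olap m w B u x)) * u x * m x.1) ≤
      (∑ x, (-(dlap m w B u x)) * u x * m x.1) +
        (-(⨅ x : {x : V // x ∉ B}, degb m w B x.1)) * ∑ x, u x * u x * m x.1 := by
    intro u
    calc (∑ x, (-(olap m w B u x)) * u x * m x.1)
        = (∑ x, (-(dlap m w B u x)) * u x * m x.1)
            + ∑ x, (-(degb m w B x.1)) * (u x * u x * m x.1) := by
          rw [← Finset.sum_add_distrib]
          exact Finset.sum_congr rfl fun x _ => by rw [dlap_eq]; ring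
      _ ≤ _ := by
          apply add_le_add le_rfl
          rw [Finset.mul_sum]
          apply Finset.sum_le_sum
          intro x _
          exact mul_le_mul_of_nonneg_right
            (neg_le_neg (ciInf_le (f := fun x : {x : V // x ∉ B} => degb m w B x.1) (Set.Finite.bddBelow (Set.finite_range _)) x))
            (mul_nonneg (mul_self_nonneg _) (le_of_lt (hm x.1)))
  have hlb := weyl_key (fun x : {x : V // x ∉ B} => m x.1) (fun x => hm x.1)
    (olap m w B) (dlap m w B) (olap_lin m w B) (dlap_lin m w B)
    μΩ lam hμΩmono hlammono hμΩ hlam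
    (-(⨅ x : {x : V // x ∉ B}, degb m w B x.1)) hqi i
  exact ⟨by linarith, by linarith⟩
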